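/- The basis ℛ₀ = {t + V_m : m ∈ ℕ, t ∈ H_m} differentiates L¹(T^ω): for every f ∈ L¹(T^ω) and almost every x ∈ T^ω, if I_x^{(m)} denotes the unique element of the net 𝒩_m = {t + V_m : t ∈ H_m} containing x, then lim_{m→∞} (1/m(I_x^{(m)})) ∫_{I_x^{(m)}} f dm = f(x). -/

import Mathlib

open MeasureTheory Filter Topology Pointwise

/-- The infinite torus `T^ω`, the countable product of circles `T = ℝ/ℤ`. -/
abbrev Tomega : Type := ℕ → AddCircle (1 : ℝ)

/-- The open arc of the circle `T = ℝ/ℤ` which is the image of the interval `(a, b) ⊂ ℝ`. -/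
def arc (a b : ℝ) : Set (AddCircle (1 : ℝ)) :=
  (fun t : ℝ => (t : AddCircle (1 : ℝ))) '' Set.Ioo a b

/-- The subgroup `R_k = {0, 1/k, …, (k-1)/k}` of `k`-th roots of unity in `T = ℝ/ℤ`. -/
noncomputable def Rsub (k : ℕ) : AddSubgroup (AddCircle (1 : ℝ)) :=
  AddSubgroup.zmultiples (((k : ℝ)⁻¹ : ℝ) : AddCircle (1 : ℝ))

/-- The exponent pattern of the Rubio de Francia construction: for `m = n² + j` with
`1 ≤ j ≤ 2n+1` (so `n = Nat.sqrt (m-1)`), the `i`-th coordinate (0-indexed) of `H_m` is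
`R_{2^(rdfExp m i)}` and the `i`-th edge of `V_m` is `(0, 2^{-(rdfExp m i)})`; coordinates
with exponent `0` carry the trivial subgroup `{0}`, resp. the full circle `T`. -/
def rdfExp (m i : ℕ) : ℕ :=
  let n := Nat.sqrt (m - 1)
  let j := m - n ^ 2
  if j ≤ n then (if i < n then n else if i = n then j else 0)
  else (if i < j - n then n + 1 else if i ≤ n then n else 0)

/-- The finite subgroup `H_m` of `T^ω` of the Rubio de Francia construction. -/
noncomputable def Hgrp (m : ℕ) : AddSubgroup Tomega :=
  AddSubgroup.pi Set.univ fun i => Rsub (2 ^ rdfExp m i)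

/-- The fundamental domain `V_m` for `T^ω / H_m` of the Rubio de Francia construction. -/
def Vset (m : ℕ) : Set Tomega :=
  {x | ∀ i, rdfExp m i ≠ 0 → x i ∈ arc 0 ((2 : ℝ) ^ rdfExp m i)⁻¹}

noncomputable def gridArc (e k : ℕ) : Set (AddCircle (1:ℝ)) :=
  arc ((k : ℝ) / 2^e) (((k : ℝ)+1) / 2^e)

lemma arc_isOpen (a b : ℝ) : IsOpen (arc a b) := by
  have h : IsOpenMap (QuotientAddGroup.mk : ℝ → AddCircle (1:ℝ)) :=
    QuotientAddGroup.isOpenMap_coe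
  exact h _ isOpen_Ioo

lemma coe_eq_coe_iff {x y : ℝ} :
    (x : AddCircle (1:ℝ)) = (y : AddCircle (1:ℝ)) ↔ ∃ n : ℤ, y - x = n := by
  rw [QuotientAddGroup.eq_iff_sub_mem, AddSubgroup.mem_zmultiples_iff]
  constructor
  · rintro ⟨k, hk⟩; exact ⟨-k, by simp at hk ⊢; linarith⟩
  · rintro ⟨n, hn⟩; exact ⟨-n, by simp; linarith⟩

lemma mem_gridArc_iff {e k : ℕ} {x : ℝ} :
    (x : AddCircle (1:ℝ)) ∈ gridArc e k ↔
      ∃ n : ℤ, x + n ∈ Set.Ioo ((k : ℝ)/2^e) (((k:ℝ)+1)/2^e) := by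
  constructor
  · rintro ⟨u, hu, huv⟩
    obtain ⟨n, hn⟩ := coe_eq_coe_iff.mp huv.symm
    exact ⟨n, by rw [show x + (n:ℝ) = u by linarith]; exact hu⟩
  · rintro ⟨n, hn⟩
    exact ⟨x + n, hn, by rw [coe_eq_coe_iff]; exact ⟨-n, by push_cast; ring⟩⟩

lemma gridArc_disjoint {e k k' : ℕ} (hk : k < 2^e) (hk' : k' < 2^e) (hne : k ≠ k') :
    Disjoint (gridArc e k) (gridArc e k') := by
  rw [Set.disjoint_left]
  rintro x ⟨u, hu, rfl⟩ hx
  rw [mem_gridArc_iff] at hx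
  obtain ⟨n, hn1, hn2⟩ := hx
  have h2 : (0:ℝ) < 2^e := by positivity
  have hb1 : (k':ℝ) < (u + n) * 2^e := by
    rw [div_lt_iff₀ h2] at hn1; linarith
  have hb2 : (u + n) * 2^e < (k':ℝ) + 1 := by
    rw [lt_div_iff₀ h2] at hn2; linarith
  have hu1 : (k:ℝ) < u * 2^e := by
    rcases hu with ⟨h1', h2'⟩; rw [div_lt_iff₀ h2] at h1'; linarith
  have hu2 : u * 2^e < (k:ℝ) + 1 := by
    rcases hu with ⟨h1', h2'⟩; rw [lt_div_iff₀ h2] at h2'; linarith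
  have key : ((2^e * n : ℤ) : ℝ) = (u+n) * 2^e - u * 2^e := by push_cast; ring
  have hlow : ((k':ℤ) : ℝ) - ((k:ℤ):ℝ) - 1 < ((2^e * n : ℤ) : ℝ) := by push_cast at key ⊢; linarith
  have hhigh : ((2^e * n : ℤ) : ℝ) < ((k':ℤ):ℝ) - ((k:ℤ):ℝ) + 1 := by push_cast at key ⊢; linarith
  have hl : (k':ℤ) - k - 1 < 2^e * n := by exact_mod_cast hlow
  have hh : (2^e * n : ℤ) < k' - k + 1 := by exact_mod_cast hhigh
  have heq : (2^e * n : ℤ) = k' - k := by omega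
  have hk2 : ((2:ℤ)^e) = ((2^e : ℕ) : ℤ) := by push_cast; ring
  rcases lt_trichotomy n 0 with h | h | h
  · have : (2^e * n : ℤ) ≤ 2^e * (-1) := by
      apply mul_le_mul_of_nonneg_left (by omega) (by positivity)
    omega
  · subst h; omega
  · have : (2^e * 1 : ℤ) ≤ 2^e * n := by
      apply mul_le_mul_of_nonneg_left (by omega) (by positivity)
    omega

lemma gridArc_subset {e e' k' : ℕ} (he : e ≤ e') :
    gridArc e' k' ⊆ gridArc e (k' / 2^(e'-e)) := by
  set d := e' - e with hd
  set k := k' / 2^d with hk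
  have hddR : (2:ℝ)^e * 2^d = 2^e' := by rw [← pow_add]; congr 1; omega
  have h1 : k * 2^d ≤ k' := Nat.div_mul_le_self k' (2^d)
  have h2 : k' + 1 ≤ (k+1) * 2^d := by
    have hdm := Nat.div_add_mod k' (2^d)
    have hml : k' % 2^d < 2^d := Nat.mod_lt _ (by positivity)
    have hex : (k+1) * 2^d = 2^d * (k' / 2^d) + 2^d := by rw [hk]; ring
    rw [hex]
    linarith
  apply Set.image_mono
  apply Set.Ioo_subset_Ioo
  · rw [div_le_div_iff₀ (by positivity) (by positivity)]
    have h1R : ((k * 2^d : ℕ) : ℝ) ≤ (k' : ℝ) := by exact_mod_cast h1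
    push_cast at h1R
    have hpe : (0:ℝ) < 2^e := by positivity
    calc (k:ℝ) * 2^e' = (k:ℝ) * 2^d * 2^e := by rw [← hddR]; ring
    _ ≤ (k':ℝ) * 2^e := by nlinarith
  · rw [div_le_div_iff₀ (by positivity) (by positivity)]
    have h2R : ((k':ℝ)+1) ≤ ((k:ℝ)+1) * 2^d := by exact_mod_cast h2
    have hpe : (0:ℝ) < 2^e := by positivity
    calc ((k':ℝ)+1) * 2^e ≤ ((k:ℝ)+1) * 2^d * 2^e := by nlinarith
    _ = ((k:ℝ)+1) * 2^e' := by rw [← hddR]; ring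

lemma mem_Rsub_iff {e : ℕ} {r : AddCircle (1:ℝ)} :
    r ∈ Rsub (2^e) ↔ ∃ k : ℕ, k < 2^e ∧ r = (((k : ℝ) / 2^e : ℝ) : AddCircle (1:ℝ)) := by
  have h2 : (0:ℝ) < 2^e := by positivity
  have hcast : (((2:ℕ)^e : ℕ) : ℝ) = (2:ℝ)^e := by push_cast; ring
  rw [Rsub, AddSubgroup.mem_zmultiples_iff]
  constructor
  · rintro ⟨z, rfl⟩
    have h0 : (0:ℤ) < 2^e := by positivity
    have hnn := Int.emod_nonneg z (ne_of_gt h0)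
    have hlt := Int.emod_lt_of_pos z h0
    have hz : 2^e * (z / 2^e) + z % 2^e = z := Int.mul_ediv_add_emod z (2^e)
    have hcz : ((2^e : ℕ) : ℤ) = (2:ℤ)^e := by push_cast; ring
    refine ⟨(z % (2^e:ℤ)).toNat, by omega, ?_⟩
    rw [← AddCircle.coe_zsmul, coe_eq_coe_iff]
    refine ⟨-(z / 2^e), ?_⟩
    have hzR := congrArg (fun w : ℤ => (w : ℝ)) hz
    push_cast at hzR
    have hk' : (((z % (2^e:ℤ)).toNat : ℕ) : ℝ) = ((z % 2^e : ℤ) : ℝ) := by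
      exact_mod_cast congrArg (fun w : ℤ => (w:ℝ)) (Int.toNat_of_nonneg hnn)
    rw [zsmul_eq_mul, hk', hcast]
    push_cast at *
    field_simp
    linarith
  · rintro ⟨k, hk, rfl⟩
    refine ⟨(k:ℤ), ?_⟩
    rw [← AddCircle.coe_zsmul]
    congr 1
    rw [zsmul_eq_mul, hcast]
    push_cast
    ring

lemma coe_vadd_arc (c a b : ℝ) :
    ((c : AddCircle (1:ℝ)) +ᵥ arc a b) = arc (a+c) (b+c) := by
  ext x
  constructor
  · rintro ⟨y, ⟨u, hu, rfl⟩, rfl⟩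
    refine ⟨c + u, ⟨by linarith [hu.1], by linarith [hu.2]⟩, ?_⟩
    show ((c + u : ℝ) : AddCircle (1:ℝ)) = (c : AddCircle (1:ℝ)) +ᵥ ((u:ℝ) : AddCircle (1:ℝ))
    rw [AddCircle.coe_add]
    rfl
  · rintro ⟨u, hu, rfl⟩
    refine ⟨((u - c : ℝ) : AddCircle (1:ℝ)), ⟨u - c, ⟨by linarith [hu.1], by linarith [hu.2]⟩, rfl⟩, ?_⟩
    show (c : AddCircle (1:ℝ)) +ᵥ ((u - c : ℝ) : AddCircle (1:ℝ)) = ((u:ℝ) : AddCircle (1:ℝ))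
    rw [vadd_eq_add, ← AddCircle.coe_add]
    congr 1
    ring

lemma vadd_arc_eq_gridArc {e k : ℕ} :
    ((((k:ℝ)/2^e : ℝ) : AddCircle (1:ℝ)) +ᵥ arc 0 ((2:ℝ)^e)⁻¹) = gridArc e k := by
  rw [coe_vadd_arc, gridArc]
  have h1 : 0 + (k:ℝ)/2^e = (k:ℝ)/2^e := by ring
  have h2 : ((2:ℝ)^e)⁻¹ + (k:ℝ)/2^e = ((k:ℝ)+1)/2^e := by field_simp; ring
  rw [h1, h2]

lemma gridArc_nonempty (e k : ℕ) : (gridArc e k).Nonempty := by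
  have h2 : (0:ℝ) < 2^e := by positivity
  refine ⟨((((k:ℝ) + 2⁻¹)/2^e : ℝ) : AddCircle (1:ℝ)), ((k:ℝ)+2⁻¹)/2^e, ⟨?_, ?_⟩, rfl⟩
  · rw [div_lt_div_iff₀ h2 h2]; nlinarith
  · rw [div_lt_div_iff₀ h2 h2]; nlinarith

lemma grid_cover {x : AddCircle (1:ℝ)} (hx : ∀ q k : ℕ, x ≠ (((k:ℝ)/2^q : ℝ) : AddCircle (1:ℝ)))
    (e : ℕ) : ∃ k, k < 2^e ∧ x ∈ gridArc e k := by
  obtain ⟨r, hr, rfl⟩ := AddCircle.eq_coe_Ico x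
  have h2 : (0:ℝ) < 2^e := by positivity
  have hr0 : 0 ≤ r := hr.1
  have hr1 : r < 1 := hr.2
  set K : ℤ := ⌊r * (2:ℝ)^e⌋ with hKdef
  have hK0 : (0:ℤ) ≤ K := Int.floor_nonneg.mpr (by positivity)
  set k : ℕ := K.toNat with hkdef
  have hflk : (k : ℝ) = (K : ℝ) := by
    rw [hkdef, ← Int.cast_natCast, Int.toNat_of_nonneg hK0]
  have hk1 : (k:ℝ) ≤ r * 2^e := by rw [hflk]; exact Int.floor_le _
  have hk2 : r * 2^e < (k:ℝ) + 1 := by rw [hflk]; exact Int.lt_floor_add_one _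
  have hklt : k < 2^e := by
    have h' : (k:ℝ) < 2^e := by nlinarith
    have h'' : (k:ℝ) < ((2^e : ℕ):ℝ) := by push_cast; linarith
    exact_mod_cast h''
  refine ⟨k, hklt, ⟨r, ⟨?_, ?_⟩, rfl⟩⟩
  · rcases eq_or_lt_of_le hk1 with heq | hlt
    · exfalso
      apply hx e k
      rw [coe_eq_coe_iff]
      refine ⟨0, ?_⟩
      push_cast
      rw [sub_eq_zero]
      rw [div_eq_iff (ne_of_gt h2)]
      linarith
    · rw [div_lt_iff₀ h2]; linarith
  · rw [lt_div_iff₀ h2]; linarith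

lemma grid_small {x : AddCircle (1:ℝ)} {U : Set (AddCircle (1:ℝ))} (hU : IsOpen U) (hxU : x ∈ U) :
    ∃ e₀ : ℕ, ∀ e, e₀ ≤ e → ∀ k, x ∈ gridArc e k → gridArc e k ⊆ U := by
  obtain ⟨w, _, rfl⟩ := AddCircle.eq_coe_Ico x
  have hW : IsOpen ((fun t : ℝ => (t : AddCircle (1:ℝ))) ⁻¹' U) :=
    hU.preimage (AddCircle.continuous_mk' 1)
  have hwW : w ∈ (fun t : ℝ => (t : AddCircle (1:ℝ))) ⁻¹' U := hxU
  obtain ⟨δ, hδ, hball⟩ := Metric.isOpen_iff.mp hW w hwW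
  obtain ⟨e₀, he₀⟩ : ∃ n : ℕ, δ⁻¹ < 2^n := pow_unbounded_of_one_lt δ⁻¹ (by norm_num)
  refine ⟨e₀, fun e he k hx => ?_⟩
  have h2 : (0:ℝ) < 2^e := by positivity
  have hsmall : ((2:ℝ)^e)⁻¹ < δ := by
    have h1 : (2:ℝ)^e₀ ≤ 2^e := pow_le_pow_right₀ (by norm_num) he
    have hδi : (0:ℝ) < δ⁻¹ := by positivity
    have : δ⁻¹ < 2^e := lt_of_lt_of_le he₀ h1
    rw [← inv_inv δ]
    exact inv_strictAnti₀ hδi this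
  obtain ⟨n, hn⟩ := mem_gridArc_iff.mp hx
  rintro y ⟨v, hv, rfl⟩
  have hlen : ((k:ℝ)+1)/2^e - (k:ℝ)/2^e = ((2:ℝ)^e)⁻¹ := by field_simp; ring
  have hdist : |(v - n) - w| < δ := by
    rw [abs_lt]
    constructor
    · have := hv.1; have := hn.2; nlinarith [hv.1, hn.2]
    · nlinarith [hv.2, hn.1]
  have hmem : (v - (n:ℝ)) ∈ (fun t : ℝ => (t : AddCircle (1:ℝ))) ⁻¹' U := by
    apply hball
    rw [Metric.mem_ball, Real.dist_eq]
    exact hdist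
  have hcoe : ((v : ℝ) : AddCircle (1:ℝ)) = ((v - (n:ℝ)) : ℝ) := by
    rw [coe_eq_coe_iff]; exact ⟨-n, by push_cast; ring⟩
  show ((v:ℝ) : AddCircle (1:ℝ)) ∈ U
  rw [hcoe]
  exact hmem


def rdfE (n j i : ℕ) : ℕ :=
  if j ≤ n then (if i < n then n else if i = n then j else 0)
  else (if i < j - n then n + 1 else if i ≤ n then n else 0)

lemma sqrt_pin {x a : ℕ} (h1 : a^2 ≤ x) (h2 : x < (a+1)^2) : Nat.sqrt x = a := by
  by_contra h
  rcases Nat.lt_or_ge (Nat.sqrt x) a with hlt | hge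
  · have e3 : (Nat.sqrt x + 1)^2 ≤ a^2 := Nat.pow_le_pow_left (by omega) 2
    have l2 := Nat.lt_succ_sqrt' x
    rw [Nat.succ_eq_add_one] at l2
    omega
  · have ha : a + 1 ≤ Nat.sqrt x := by omega
    have e4 : (a+1)^2 ≤ (Nat.sqrt x)^2 := Nat.pow_le_pow_left ha 2
    have l1 := Nat.sqrt_le' x
    have e1 : Nat.sqrt x * Nat.sqrt x = (Nat.sqrt x)^2 := by ring
    omega

lemma rdfExp_eq (n j i : ℕ) (h1 : 1 ≤ j) (h2 : j ≤ 2*n+1) :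
    rdfExp (n^2 + j) i = rdfE n j i := by
  have hs : Nat.sqrt (n^2 + j - 1) = n := by
    apply sqrt_pin
    · omega
    · have : (n+1)^2 = n^2 + 2*n + 1 := by ring
      omega
  have hz : n^2 + j - n^2 = j := by omega
  unfold rdfExp
  simp only [hs, hz]
  rfl

lemma rdf_repr (m : ℕ) (hm : 1 ≤ m) :
    ∃ n j, 1 ≤ j ∧ j ≤ 2*n+1 ∧ m = n^2 + j := by
  refine ⟨Nat.sqrt (m-1), m - Nat.sqrt (m-1)^2, ?_, ?_, ?_⟩
  · have := Nat.sqrt_le' (m-1)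
    have e1 : Nat.sqrt (m-1) * Nat.sqrt (m-1) = (Nat.sqrt (m-1))^2 := by ring
    omega
  · have := Nat.lt_succ_sqrt' (m-1)
    rw [Nat.succ_eq_add_one] at this
    have e : (Nat.sqrt (m-1)+1)^2 = Nat.sqrt (m-1)^2 + 2*Nat.sqrt (m-1) + 1 := by ring
    omega
  · have := Nat.sqrt_le' (m-1)
    have e1 : Nat.sqrt (m-1) * Nat.sqrt (m-1) = (Nat.sqrt (m-1))^2 := by ring
    omega

lemma rdfExp_zero (i : ℕ) : rdfExp 0 i = 0 := by
  unfold rdfExp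
  norm_num

lemma rdfE_mono_succ (n j i : ℕ) (h1 : 1 ≤ j) (h2 : j ≤ 2*n) : rdfE n j i ≤ rdfE n (j+1) i := by
  unfold rdfE; split_ifs <;> omega

lemma rdfE_roll (n i : ℕ) : rdfE n (2*n+1) i ≤ rdfE (n+1) 1 i := by
  unfold rdfE; split_ifs <;> omega

lemma rdfExp_mono_succ (m i : ℕ) : rdfExp m i ≤ rdfExp (m+1) i := by
  rcases Nat.eq_zero_or_pos m with rfl | hm
  · simp [rdfExp_zero]
  obtain ⟨n, j, h1, h2, rfl⟩ := rdf_repr m hm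
  rcases eq_or_lt_of_le h2 with he | hlt
  · subst he
    have e : n^2 + (2*n+1) + 1 = (n+1)^2 + 1 := by ring
    rw [rdfExp_eq n _ i h1 le_rfl, e, rdfExp_eq (n+1) 1 i le_rfl (by omega)]
    exact rdfE_roll n i
  · have e : n^2 + j + 1 = n^2 + (j+1) := by ring
    rw [rdfExp_eq n j i h1 (by omega), e, rdfExp_eq n (j+1) i (by omega) (by omega)]
    exact rdfE_mono_succ n j i h1 (by omega)

lemma rdfExp_mono (i : ℕ) : Monotone (fun m => rdfExp m i) :=
  monotone_nat_of_le_succ (fun m => rdfExp_mono_succ m i)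

lemma rdfExp_eq_zero_of_lt (m i : ℕ) (hi : Nat.sqrt (m-1) < i) : rdfExp m i = 0 := by
  rcases Nat.eq_zero_or_pos m with rfl | hm
  · exact rdfExp_zero i
  obtain ⟨n, j, h1, h2, rfl⟩ := rdf_repr m hm
  have hs : Nat.sqrt (n^2+j-1) = n := by
    apply sqrt_pin
    · omega
    · have : (n+1)^2 = n^2 + 2*n + 1 := by ring
      omega
  rw [hs] at hi
  rw [rdfExp_eq n j i h1 h2]
  unfold rdfE
  split_ifs <;> omega

lemma rdfExp_ge (m i : ℕ) (h : i < Nat.sqrt (m-1)) : Nat.sqrt (m-1) ≤ rdfExp m i := by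
  rcases Nat.eq_zero_or_pos m with rfl | hm
  · simp at h
  obtain ⟨n, j, h1, h2, rfl⟩ := rdf_repr m hm
  have hs : Nat.sqrt (n^2+j-1) = n := by
    apply sqrt_pin
    · omega
    · have : (n+1)^2 = n^2 + 2*n + 1 := by ring
      omega
  rw [hs] at h ⊢
  rw [rdfExp_eq n j i h1 h2]
  unfold rdfE
  split_ifs <;> omega

lemma rdfExp_tendsto (i : ℕ) : Filter.Tendsto (fun m => rdfExp m i) Filter.atTop Filter.atTop := by
  apply tendsto_atTop_atTop.2
  intro b
  refine ⟨(b + i + 1)^2 + 1, fun m hm => ?_⟩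
  have hsq : b + i + 1 ≤ Nat.sqrt (m - 1) := by
    have : (b+i+1)^2 ≤ m - 1 := by omega
    calc b + i + 1 = Nat.sqrt ((b+i+1)^2) := (sqrt_pin le_rfl (Nat.pow_lt_pow_left (by omega) two_ne_zero)).symm
    _ ≤ Nat.sqrt (m-1) := Nat.sqrt_le_sqrt this
  have := rdfExp_ge m i (by omega)
  omega

def cellK (m : ℕ) (κ : ℕ → ℕ) : Set Tomega :=
  {x | ∀ i, rdfExp m i ≠ 0 → x i ∈ gridArc (rdfExp m i) (κ i)}

lemma mem_Hgrp_iff {m : ℕ} {t : Tomega} : t ∈ Hgrp m ↔ ∀ i, t i ∈ Rsub (2 ^ rdfExp m i) := by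
  simp [Hgrp, AddSubgroup.mem_pi]

lemma cell_eq {m : ℕ} {κ : ℕ → ℕ} {t : Tomega}
    (ht : ∀ i, rdfExp m i ≠ 0 → t i = (((κ i : ℝ) / 2^(rdfExp m i) : ℝ) : AddCircle (1:ℝ))) :
    t +ᵥ Vset m = cellK m κ := by
  ext x
  rw [Set.mem_vadd_set_iff_neg_vadd_mem]
  show (∀ i, rdfExp m i ≠ 0 → (-t +ᵥ x) i ∈ arc 0 ((2:ℝ)^(rdfExp m i))⁻¹) ↔ _
  apply forall_congr'
  intro i
  apply imp_congr_right
  intro hi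
  have hco : (-t +ᵥ x) i = -(t i) + x i := rfl
  rw [hco, ht i hi, ← vadd_arc_eq_gridArc, Set.mem_vadd_set_iff_neg_vadd_mem, vadd_eq_add]

lemma cell_repr {m : ℕ} {t : Tomega} (ht : t ∈ Hgrp m) :
    ∃ κ : ℕ → ℕ, (∀ i, κ i < 2 ^ rdfExp m i) ∧ t +ᵥ Vset m = cellK m κ ∧
      (∀ i, t i = (((κ i : ℝ) / 2^(rdfExp m i) : ℝ) : AddCircle (1:ℝ))) := by
  rw [mem_Hgrp_iff] at ht
  choose κ hκ hteq using fun i => mem_Rsub_iff.mp (ht i)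
  exact ⟨κ, hκ, cell_eq (fun i _ => hteq i), hteq⟩

lemma cell_exists {m : ℕ} {κ : ℕ → ℕ} (hκ : ∀ i, κ i < 2 ^ rdfExp m i) :
    ∃ t ∈ Hgrp m, t +ᵥ Vset m = cellK m κ := by
  refine ⟨fun i => (((κ i : ℝ) / 2^(rdfExp m i) : ℝ) : AddCircle (1:ℝ)), ?_, cell_eq (fun i _ => rfl)⟩
  rw [mem_Hgrp_iff]
  exact fun i => mem_Rsub_iff.mpr ⟨κ i, hκ i, rfl⟩

lemma cell_disjoint {m : ℕ} {t t' : Tomega} (ht : t ∈ Hgrp m) (ht' : t' ∈ Hgrp m) (hne : t ≠ t') :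
    Disjoint (t +ᵥ Vset m) (t' +ᵥ Vset m) := by
  obtain ⟨κ, hκ, heq, hti⟩ := cell_repr ht
  obtain ⟨κ', hκ', heq', hti'⟩ := cell_repr ht'
  obtain ⟨i, hi⟩ : ∃ i, t i ≠ t' i := by
    by_contra h; push_neg at h; exact hne (funext h)
  have hie : rdfExp m i ≠ 0 := by
    intro h0
    apply hi
    rw [hti i, hti' i, h0]
    have h1 : κ i = 0 := by have := hκ i; rw [h0] at this; simpa using this
    have h2 : κ' i = 0 := by have := hκ' i; rw [h0] at this; simpa using this
    rw [h1, h2]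
  have hkne : κ i ≠ κ' i := by
    intro h; apply hi; rw [hti i, hti' i, h]
  rw [heq, heq', Set.disjoint_left]
  intro x hx hx'
  exact Set.disjoint_left.mp (gridArc_disjoint (hκ i) (hκ' i) hkne) (hx i hie) (hx' i hie)

lemma cell_refine {k m : ℕ} (hkm : k ≤ m) {t' : Tomega} (ht' : t' ∈ Hgrp m) :
    ∃ t ∈ Hgrp k, t' +ᵥ Vset m ⊆ t +ᵥ Vset k := by
  obtain ⟨κ', hκ', heq', -⟩ := cell_repr ht'
  have hκb : ∀ i, κ' i / 2 ^ (rdfExp m i - rdfExp k i) < 2 ^ rdfExp k i := by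
    intro i
    have hmono : rdfExp k i ≤ rdfExp m i := rdfExp_mono i hkm
    apply Nat.div_lt_of_lt_mul
    calc κ' i < 2 ^ rdfExp m i := hκ' i
    _ = 2 ^ (rdfExp m i - rdfExp k i) * 2 ^ rdfExp k i := by rw [← pow_add]; congr 1; omega
  obtain ⟨t, htH, hteq⟩ := cell_exists hκb
  refine ⟨t, htH, ?_⟩
  rw [heq', hteq]
  intro x hx i hi
  have hmono : rdfExp k i ≤ rdfExp m i := rdfExp_mono i hkm
  have him : rdfExp m i ≠ 0 := by omega
  exact gridArc_subset hmono (hx i him)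

lemma cell_cover {x : Tomega} (hx : ∀ j q l : ℕ, x j ≠ (((l:ℝ)/2^q : ℝ) : AddCircle (1:ℝ)))
    (m : ℕ) : ∃ t ∈ Hgrp m, ∃ κ, t +ᵥ Vset m = cellK m κ ∧ x ∈ cellK m κ := by
  have hex : ∀ i, ∃ l, l < 2 ^ rdfExp m i ∧ (rdfExp m i ≠ 0 → x i ∈ gridArc (rdfExp m i) l) := by
    intro i
    by_cases hi : rdfExp m i = 0
    · exact ⟨0, by rw [hi]; norm_num, fun h => absurd hi h⟩
    · obtain ⟨l, hl, hmem⟩ := grid_cover (fun q k => hx i q k) (rdfExp m i)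
      exact ⟨l, hl, fun _ => hmem⟩
  choose κ hκ hκmem using hex
  obtain ⟨t, htH, hteq⟩ := cell_exists hκ
  exact ⟨t, htH, κ, hteq, fun i hi => hκmem i hi⟩

lemma cellK_eq_iInter (m : ℕ) (κ : ℕ → ℕ) : cellK m κ = ⋂ i ∈ Finset.range (Nat.sqrt (m-1) + 1),
    {x : Tomega | rdfExp m i ≠ 0 → x i ∈ gridArc (rdfExp m i) (κ i)} := by
  ext x
  simp only [Set.mem_iInter, cellK, Set.mem_setOf_eq, Finset.mem_range]
  constructor
  · exact fun h i _ => h i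
  · intro h i hi
    by_cases hle : i < Nat.sqrt (m-1) + 1
    · exact h i hle hi
    · exact absurd (rdfExp_eq_zero_of_lt m i (by omega)) hi

lemma cellK_isOpen (m : ℕ) (κ : ℕ → ℕ) : IsOpen (cellK m κ) := by
  rw [cellK_eq_iInter]
  apply isOpen_biInter_finset
  intro i _
  by_cases hi : rdfExp m i = 0
  · have : {x : Tomega | rdfExp m i ≠ 0 → x i ∈ gridArc (rdfExp m i) (κ i)} = Set.univ := by
      ext x; simp [hi]
    rw [this]; exact isOpen_univ
  · have : {x : Tomega | rdfExp m i ≠ 0 → x i ∈ gridArc (rdfExp m i) (κ i)} =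
        (fun x : Tomega => x i) ⁻¹' gridArc (rdfExp m i) (κ i) := by
      ext x; simp [hi]
    rw [this]
    exact IsOpen.preimage (continuous_apply i) (arc_isOpen _ _)

lemma cellK_nonempty (m : ℕ) (κ : ℕ → ℕ) : (cellK m κ).Nonempty := by
  refine ⟨fun i => ((((κ i:ℝ) + 2⁻¹)/2^(rdfExp m i) : ℝ) : AddCircle (1:ℝ)), fun i hi => ?_⟩
  have h2 : (0:ℝ) < 2^(rdfExp m i) := by positivity
  refine ⟨((κ i:ℝ)+2⁻¹)/2^(rdfExp m i), ⟨?_, ?_⟩, rfl⟩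
  · rw [div_lt_div_iff₀ h2 h2]; nlinarith
  · rw [div_lt_div_iff₀ h2 h2]; nlinarith

lemma Rsub_finite (e : ℕ) : (Rsub (2^e) : Set (AddCircle (1:ℝ))).Finite := by
  apply Set.Finite.subset (Set.finite_range (fun k : Fin (2^e) => ((((k:ℕ):ℝ) / 2^e : ℝ) : AddCircle (1:ℝ))))
  intro r hr
  obtain ⟨k, hk, rfl⟩ := mem_Rsub_iff.mp hr
  exact ⟨⟨k, hk⟩, rfl⟩

lemma Hgrp_finite (m : ℕ) : (Hgrp m : Set Tomega).Finite := by
  classical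
  set N := Nat.sqrt (m-1) + 1 with hN
  apply Set.Finite.of_finite_image (f := fun t : Tomega => fun i : Fin N => t i)
  · apply Set.Finite.subset (Set.Finite.pi (fun i : Fin N => Rsub_finite (rdfExp m i)))
    rintro _ ⟨t, ht, rfl⟩
    intro i _
    exact mem_Hgrp_iff.mp ht i
  · intro t ht t' ht' hres
    funext i
    by_cases hi : i < N
    · exact congrFun hres ⟨i, hi⟩
    · have hie : rdfExp m i = 0 := rdfExp_eq_zero_of_lt m i (by omega)
      obtain ⟨k, hk, hkk⟩ := mem_Rsub_iff.mp (mem_Hgrp_iff.mp ht i)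
      obtain ⟨k', hk', hkk'⟩ := mem_Rsub_iff.mp (mem_Hgrp_iff.mp ht' i)
      rw [hie] at hk hk' hkk hkk'
      have h1 : k = 0 := by simpa using hk
      have h2 : k' = 0 := by simpa using hk'
      rw [hkk, hkk', h1, h2]

noncomputable def HFin (m : ℕ) : Finset Tomega := (Hgrp_finite m).toFinset

lemma mem_HFin {m : ℕ} {t : Tomega} : t ∈ HFin m ↔ t ∈ Hgrp m := by
  simp [HFin, Set.Finite.mem_toFinset]

lemma Vset_zero : Vset 0 = Set.univ := by
  ext x
  simp [Vset, rdfExp_zero]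

lemma univ_cell : (0 : Tomega) +ᵥ Vset 0 = Set.univ := by
  rw [Vset_zero]
  ext x
  simp [Set.mem_vadd_set_iff_neg_vadd_mem]

lemma coord_preimage_null (μ : Measure Tomega) [μ.IsAddHaarMeasure] [IsProbabilityMeasure μ]
    (i : ℕ) (c : AddCircle (1:ℝ)) : μ {x : Tomega | x i = c} = 0 := by
  classical
  by_contra h0
  set S : Set Tomega := {x : Tomega | x i = c} with hS
  set u : ℕ → ℝ := fun q => 1/(q+2) with hu
  have humem : ∀ q : ℕ, u q ∈ Set.Ico (0:ℝ) (0+1) := by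
    intro q
    have h1 : u q = 1/((q:ℝ)+2) := rfl
    constructor
    · rw [h1]; positivity
    · rw [h1, zero_add, div_lt_one (by positivity)]
      have := Nat.cast_nonneg (α := ℝ) q
      linarith
  have hui : Function.Injective (fun q : ℕ => ((u q : ℝ) : AddCircle (1:ℝ))) := by
    intro q q' h
    rw [AddCircle.coe_eq_coe_iff_of_mem_Ico (humem q) (humem q')] at h
    have h1 : (1:ℝ)/((q:ℝ)+2) = 1/((q':ℝ)+2) := h
    have hq2 : (0:ℝ) < (q:ℝ)+2 := by positivity
    have hq2' : (0:ℝ) < (q':ℝ)+2 := by positivity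
    rw [div_eq_div_iff (ne_of_gt hq2) (ne_of_gt hq2')] at h1
    have : (q:ℝ) = q' := by linarith
    exact_mod_cast this
  set g : ℕ → Tomega := fun q => Function.update (0 : Tomega) i ((u q : ℝ) : AddCircle (1:ℝ)) with hg
  have hset : ∀ q, g q +ᵥ S = {x : Tomega | x i = ((u q : ℝ) : AddCircle (1:ℝ)) + c} := by
    intro q
    ext x
    rw [Set.mem_vadd_set_iff_neg_vadd_mem]
    show (-(g q) + x) i ∈ ({y : AddCircle (1:ℝ) | y = c}) ↔ _
    have hgi : g q i = ((u q : ℝ) : AddCircle (1:ℝ)) := by rw [hg]; simp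
    have hco : (-(g q) + x) i = -(g q i) + x i := rfl
    simp only [Set.mem_setOf_eq, hco, hgi]
    constructor
    · intro h
      rw [← h, ← add_assoc, add_neg_cancel, zero_add]
    · intro h
      rw [h, ← add_assoc, neg_add_cancel, zero_add]
  have hmeas : ∀ q : ℕ, MeasurableSet {x : Tomega | x i = ((u q : ℝ) : AddCircle (1:ℝ)) + c} :=
    fun q => (measurable_pi_apply i) (measurableSet_singleton _)
  have hdisj : Pairwise (Function.onFun Disjoint fun q : ℕ =>
      {x : Tomega | x i = ((u q : ℝ) : AddCircle (1:ℝ)) + c}) := by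
    intro q q' hqq'
    simp only [Function.onFun, Set.disjoint_left]
    intro x hx hx'
    simp only [Set.mem_setOf_eq] at hx hx'
    apply hqq'
    apply hui
    have := hx.symm.trans hx'
    exact add_right_cancel this
  have hμeq : ∀ q : ℕ, μ {x : Tomega | x i = ((u q : ℝ) : AddCircle (1:ℝ)) + c} = μ S := by
    intro q
    rw [← hset q]
    exact measure_vadd μ (g q) S
  have htop : μ (⋃ q : ℕ, {x : Tomega | x i = ((u q : ℝ) : AddCircle (1:ℝ)) + c}) = (⊤ : ENNReal) := by
    rw [measure_iUnion hdisj hmeas]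
    simp only [hμeq]
    exact ENNReal.tsum_const_eq_top_of_ne_zero h0
  have hle := measure_mono (μ := μ)
    (Set.subset_univ (⋃ q : ℕ, {x : Tomega | x i = ((u q : ℝ) : AddCircle (1:ℝ)) + c}))
  rw [htop, measure_univ] at hle
  exact absurd hle (by norm_num)

def dyadicBad : Set Tomega :=
  ⋃ (j : ℕ), ⋃ (q : ℕ), ⋃ (l : ℕ), {x : Tomega | x j = (((l:ℝ)/2^q : ℝ) : AddCircle (1:ℝ))}

lemma dyadicBad_null (μ : Measure Tomega) [μ.IsAddHaarMeasure] [IsProbabilityMeasure μ] :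
    μ dyadicBad = 0 :=
  measure_iUnion_null fun j => measure_iUnion_null fun q => measure_iUnion_null fun l =>
    coord_preimage_null μ j _

lemma not_mem_dyadicBad {x : Tomega} (hx : x ∉ dyadicBad) :
    ∀ j q l : ℕ, x j ≠ (((l:ℝ)/2^q : ℝ) : AddCircle (1:ℝ)) := by
  intro j q l h
  exact hx (Set.mem_iUnion.mpr ⟨j, Set.mem_iUnion.mpr ⟨q, Set.mem_iUnion.mpr ⟨l, h⟩⟩⟩)

lemma cells_cover_ae (μ : Measure Tomega) [μ.IsAddHaarMeasure] [IsProbabilityMeasure μ] (m : ℕ) :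
    μ (⋃ t ∈ (Hgrp m : Set Tomega), t +ᵥ Vset m)ᶜ = 0 := by
  apply measure_mono_null ?_ (dyadicBad_null μ)
  intro x hx
  by_contra hxd
  obtain ⟨t, ht, κ, hteq, hxt⟩ := cell_cover (not_mem_dyadicBad hxd) m
  exact hx (Set.mem_biUnion ht (hteq ▸ hxt))

lemma cell_pos (μ : Measure Tomega) [μ.IsAddHaarMeasure] [IsProbabilityMeasure μ]
    {m : ℕ} {t : Tomega} (ht : t ∈ Hgrp m) : 0 < μ (t +ᵥ Vset m) := by
  obtain ⟨κ, hκ, heq, -⟩ := cell_repr ht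
  rw [heq]
  exact (cellK_isOpen m κ).measure_pos μ (cellK_nonempty m κ)

lemma cell_measurableSet {m : ℕ} {t : Tomega} (ht : t ∈ Hgrp m) :
    MeasurableSet (t +ᵥ Vset m) := by
  obtain ⟨κ, hκ, heq, -⟩ := cell_repr ht
  rw [heq]
  exact (cellK_isOpen m κ).measurableSet

def cellSet (M : ℕ) : Set (Set Tomega) := {s | ∃ k, k ≤ M ∧ ∃ t ∈ Hgrp k, s = t +ᵥ Vset k}

lemma cellSet_isPiSystem (M : ℕ) : IsPiSystem (cellSet M) := by
  have key : ∀ (k k' : ℕ), k' ≤ k → ∀ t ∈ Hgrp k, ∀ t' ∈ Hgrp k',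
      ((t +ᵥ Vset k) ∩ (t' +ᵥ Vset k')).Nonempty →
      (t +ᵥ Vset k) ∩ (t' +ᵥ Vset k') = t +ᵥ Vset k := by
    intro k k' hkk t ht t' ht' hne
    obtain ⟨p, hp, hsub⟩ := cell_refine hkk ht
    by_cases hpt : p = t'
    · subst hpt
      exact Set.inter_eq_left.mpr hsub
    · exfalso
      obtain ⟨x, hx1, hx2⟩ := hne
      exact Set.disjoint_left.mp (cell_disjoint hp ht' hpt) (hsub hx1) hx2
  rintro s ⟨k, hk, t, ht, rfl⟩ s' ⟨k', hk', t', ht', rfl⟩ hne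
  rcases le_total k' k with h | h
  · rw [key k k' h t ht t' ht' hne]; exact ⟨k, hk, t, ht, rfl⟩
  · rw [Set.inter_comm] at hne ⊢
    rw [key k' k h t' ht' t ht hne]; exact ⟨k', hk', t', ht', rfl⟩

noncomputable def RdF : MeasureTheory.Filtration ℕ (inferInstance : MeasurableSpace Tomega) where
  seq m := MeasurableSpace.generateFrom (cellSet (m+1))
  mono' := fun a b hab => MeasurableSpace.generateFrom_mono
    (fun s hs => by obtain ⟨k, hk, h⟩ := hs; exact ⟨k, by omega, h⟩)
  le' := fun m => MeasurableSpace.generateFrom_le (by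
    rintro s ⟨k, hk, t, ht, rfl⟩
    exact cell_measurableSet ht)

lemma cell_mem_RdF {k m : ℕ} (hk : k ≤ m + 1) {t : Tomega} (ht : t ∈ Hgrp k) :
    MeasurableSet[RdF m] (t +ᵥ Vset k) :=
  MeasurableSpace.measurableSet_generateFrom ⟨k, hk, t, ht, rfl⟩

noncomputable def avgF (μ : Measure Tomega) (f : Tomega → ℝ) (m : ℕ) : Tomega → ℝ :=
  ∑ t ∈ HFin (m+1), Set.indicator (t +ᵥ Vset (m+1))
    (fun _ => (μ (t +ᵥ Vset (m+1))).toReal⁻¹ * ∫ y in t +ᵥ Vset (m+1), f y ∂μ)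

section AvgF

variable (μ : Measure Tomega) [μ.IsAddHaarMeasure] [IsProbabilityMeasure μ] (f : Tomega → ℝ)

lemma avgF_stronglyMeasurable (m : ℕ) : StronglyMeasurable[RdF m] (avgF μ f m) := by
  apply Finset.stronglyMeasurable_sum
  intro t ht
  exact StronglyMeasurable.indicator stronglyMeasurable_const
    (cell_mem_RdF (le_refl (m+1)) (mem_HFin.mp ht))

lemma avgF_integrable (m : ℕ) : Integrable (avgF μ f m) μ := by
  have h : avgF μ f m = fun a => ∑ t ∈ HFin (m+1), Set.indicator (t +ᵥ Vset (m+1))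
      (fun _ => (μ (t +ᵥ Vset (m+1))).toReal⁻¹ * ∫ y in t +ᵥ Vset (m+1), f y ∂μ) a := by
    funext a
    rw [avgF, Finset.sum_apply]
  rw [h]
  apply integrable_finset_sum
  intro t ht
  exact (integrable_const _).indicator (cell_measurableSet (mem_HFin.mp ht))

lemma setIntegral_avgF_cell (hf : Integrable f μ) (m : ℕ) {k : ℕ} (hk : k ≤ m + 1)
    {t₀ : Tomega} (ht₀ : t₀ ∈ Hgrp k) :
    ∫ x in t₀ +ᵥ Vset k, avgF μ f m x ∂μ = ∫ x in t₀ +ᵥ Vset k, f x ∂μ := by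
  classical
  set C := t₀ +ᵥ Vset k with hC
  have hCm : MeasurableSet C := cell_measurableSet ht₀
  have hDm : ∀ t ∈ HFin (m+1), MeasurableSet (t +ᵥ Vset (m+1)) :=
    fun t ht => cell_measurableSet (mem_HFin.mp ht)
  have hterm : ∀ t ∈ HFin (m+1),
      ∫ x in C, Set.indicator (t +ᵥ Vset (m+1))
        (fun _ => (μ (t +ᵥ Vset (m+1))).toReal⁻¹ * ∫ y in t +ᵥ Vset (m+1), f y ∂μ) x ∂μ
        = ∫ x in (t +ᵥ Vset (m+1)) ∩ C, f x ∂μ := by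
    intro t ht
    have htH := mem_HFin.mp ht
    rw [integral_indicator_const _ (hDm t ht), measureReal_def, Measure.restrict_apply (hDm t ht)]
    obtain ⟨p, hpH, hsub⟩ := cell_refine (show k ≤ m+1 by omega) htH
    by_cases hpt : p = t₀
    · subst hpt
      have hDC : (t +ᵥ Vset (m+1)) ∩ C = t +ᵥ Vset (m+1) := Set.inter_eq_left.mpr hsub
      rw [hDC]
      have hpos : 0 < μ (t +ᵥ Vset (m+1)) := cell_pos μ htH
      have hfin : μ (t +ᵥ Vset (m+1)) ≠ (⊤ : ENNReal) := measure_ne_top μ _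
      have hne : (μ (t +ᵥ Vset (m+1))).toReal ≠ 0 :=
        ne_of_gt (ENNReal.toReal_pos (ne_of_gt hpos) hfin)
      rw [smul_eq_mul, ← mul_assoc, mul_inv_cancel₀ hne, one_mul]
    · have hDC : (t +ᵥ Vset (m+1)) ∩ C = ∅ := by
        have hdisj := cell_disjoint hpH ht₀ hpt
        apply Set.eq_empty_iff_forall_notMem.mpr
        rintro x ⟨hx1, hx2⟩
        exact Set.disjoint_left.mp hdisj (hsub hx1) hx2
      rw [hDC]
      simp
  have hsum : ∫ x in C, avgF μ f m x ∂μ = ∑ t ∈ HFin (m+1),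
      ∫ x in (t +ᵥ Vset (m+1)) ∩ C, f x ∂μ := by
    have hexp : ∀ x : Tomega, avgF μ f m x = ∑ t ∈ HFin (m+1), Set.indicator (t +ᵥ Vset (m+1))
        (fun _ => (μ (t +ᵥ Vset (m+1))).toReal⁻¹ * ∫ y in t +ᵥ Vset (m+1), f y ∂μ) x := by
      intro x
      rw [avgF, Finset.sum_apply]
    calc ∫ x in C, avgF μ f m x ∂μ
        = ∫ x in C, (∑ t ∈ HFin (m+1), Set.indicator (t +ᵥ Vset (m+1))
            (fun _ => (μ (t +ᵥ Vset (m+1))).toReal⁻¹ * ∫ y in t +ᵥ Vset (m+1), f y ∂μ) x) ∂μ := by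
          apply setIntegral_congr_fun hCm
          exact fun x _ => hexp x
    _ = ∑ t ∈ HFin (m+1), ∫ x in C, Set.indicator (t +ᵥ Vset (m+1))
            (fun _ => (μ (t +ᵥ Vset (m+1))).toReal⁻¹ * ∫ y in t +ᵥ Vset (m+1), f y ∂μ) x ∂μ := by
          apply integral_finset_sum
          intro t ht
          exact ((integrable_const _).indicator (hDm t ht)).integrableOn
    _ = ∑ t ∈ HFin (m+1), ∫ x in (t +ᵥ Vset (m+1)) ∩ C, f x ∂μ :=
          Finset.sum_congr rfl hterm
  rw [hsum]
  have hpair : Set.Pairwise ↑(HFin (m+1)) (Function.onFun Disjoint fun t : Tomega => (t +ᵥ Vset (m+1)) ∩ C) := by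
    intro t ht t' ht' hne
    have h1 : t ∈ Hgrp (m+1) := mem_HFin.mp (by simpa using ht)
    have h2 : t' ∈ Hgrp (m+1) := mem_HFin.mp (by simpa using ht')
    exact (cell_disjoint h1 h2 hne).mono Set.inter_subset_left Set.inter_subset_left
  have hbig := integral_biUnion_finset (HFin (m+1)) (f := f) (μ := μ)
    (fun t ht => (hDm t ht).inter hCm) hpair (fun t ht => hf.integrableOn)
  rw [← hbig]
  apply setIntegral_congr_set
  have hsub2 : ∀ x : Tomega, x ∈ (⋃ t ∈ (Hgrp (m+1) : Set Tomega), t +ᵥ Vset (m+1)) →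
      ((x ∈ ⋃ t ∈ HFin (m+1), ((t +ᵥ Vset (m+1)) ∩ C)) ↔ x ∈ C) := by
    intro x hx
    simp only [Set.mem_iUnion, Set.mem_inter_iff, exists_prop]
    constructor
    · rintro ⟨t, ht, hxt, hxC⟩
      exact hxC
    · intro hxC
      obtain ⟨t, ht, hxt⟩ := Set.mem_iUnion₂.mp hx
      exact ⟨t, mem_HFin.mpr ht, hxt, hxC⟩
  rw [Filter.eventuallyEq_set]
  have hcov : ∀ᵐ x ∂μ, x ∉ (⋃ t ∈ (Hgrp (m+1) : Set Tomega), t +ᵥ Vset (m+1))ᶜ :=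
    measure_eq_zero_iff_ae_notMem.mp (cells_cover_ae μ (m+1))
  filter_upwards [hcov] with x hx
  rw [Set.notMem_compl_iff] at hx
  exact hsub2 x hx

lemma avgF_setIntegral (hf : Integrable f μ) (m : ℕ) :
    ∀ s : Set Tomega, MeasurableSet[RdF m] s →
      ∫ x in s, avgF μ f m x ∂μ = ∫ x in s, f x ∂μ := by
  have havg := avgF_integrable μ f m
  have huniv : ∫ x, avgF μ f m x ∂μ = ∫ x, f x ∂μ := by
    have h := setIntegral_avgF_cell μ f hf m (Nat.zero_le (m+1)) (AddSubgroup.zero_mem (Hgrp 0))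
    rw [univ_cell] at h
    simpa [Measure.restrict_univ] using h
  intro s hs
  refine @MeasurableSpace.induction_on_inter Tomega (RdF m)
    (fun u _ => ∫ x in u, avgF μ f m x ∂μ = ∫ x in u, f x ∂μ) (cellSet (m+1))
    rfl (cellSet_isPiSystem (m+1)) (by simp) ?_ ?_ ?_ s hs
  · rintro u ⟨k, hk, t, ht, rfl⟩
    exact setIntegral_avgF_cell μ f hf m hk ht
  · intro u hu hint
    have hum : MeasurableSet u := RdF.le m u hu
    rw [setIntegral_compl hum havg, setIntegral_compl hum hf, hint, huniv]
  · intro g hdisj hmeas hint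
    have hgm : ∀ n, MeasurableSet (g n) := fun n => RdF.le m _ (hmeas n)
    rw [integral_iUnion hgm hdisj havg.integrableOn, integral_iUnion hgm hdisj hf.integrableOn]
    exact tsum_congr hint

lemma condexp_eq_avgF (hf : Integrable f μ) (m : ℕ) :
    μ[f | RdF m] =ᵐ[μ] avgF μ f m := by
  have hle : (RdF m : MeasurableSpace Tomega) ≤ (inferInstance : MeasurableSpace Tomega) :=
    RdF.le m
  haveI : SigmaFinite (μ.trim hle) := inferInstance
  exact (ae_eq_condExp_of_forall_setIntegral_eq hle hf
    (fun s _ _ => (avgF_integrable μ f m).integrableOn)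
    (fun s hs _ => avgF_setIntegral μ f hf m s hs)
    (StronglyMeasurable.aestronglyMeasurable (avgF_stronglyMeasurable μ f m))).symm

end AvgF

def aeSup (μ : Measure Tomega) (m' : MeasurableSpace Tomega) : MeasurableSpace Tomega where
  MeasurableSet' A := ∃ B : Set Tomega, MeasurableSet[m'] B ∧ μ (symmDiff A B) = 0
  measurableSet_empty := ⟨∅, @MeasurableSet.empty _ m', by simp⟩
  measurableSet_compl := by
    rintro A ⟨B, hB, h0⟩
    exact ⟨Bᶜ, hB.compl, by rwa [compl_symmDiff_compl]⟩
  measurableSet_iUnion := by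
    intro A hA
    choose B hB h0 using hA
    refine ⟨⋃ n, B n, MeasurableSet.iUnion hB, ?_⟩
    apply measure_mono_null ?_ (measure_iUnion_null (s := fun n => symmDiff (A n) (B n)) h0)
    intro x hx
    rw [Set.mem_symmDiff] at hx
    rcases hx with ⟨hxA, hxB⟩ | ⟨hxB, hxA⟩
    · obtain ⟨n, hn⟩ := Set.mem_iUnion.mp hxA
      exact Set.mem_iUnion.mpr ⟨n, Set.mem_symmDiff.mpr
        (Or.inl ⟨hn, fun h => hxB (Set.mem_iUnion.mpr ⟨n, h⟩)⟩)⟩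
    · obtain ⟨n, hn⟩ := Set.mem_iUnion.mp hxB
      exact Set.mem_iUnion.mpr ⟨n, Set.mem_symmDiff.mpr
        (Or.inr ⟨hn, fun h => hxA (Set.mem_iUnion.mpr ⟨n, h⟩)⟩)⟩

lemma measurableSet_aeSup_iff {μ : Measure Tomega} {m' : MeasurableSpace Tomega}
    {A : Set Tomega} : MeasurableSet[aeSup μ m'] A ↔
      ∃ B : Set Tomega, MeasurableSet[m'] B ∧ μ (symmDiff A B) = 0 := Iff.rfl

lemma open_preimage_aeSup (μ : Measure Tomega) [μ.IsAddHaarMeasure] [IsProbabilityMeasure μ]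
    (i : ℕ) (U : Set (AddCircle (1:ℝ))) (hU : IsOpen U) :
    MeasurableSet[aeSup μ (⨆ m, (RdF m : MeasurableSpace Tomega))]
      ((fun x : Tomega => x i) ⁻¹' U) := by
  classical
  rw [measurableSet_aeSup_iff]
  refine ⟨⋃ (k : ℕ), ⋃ t ∈ HFin k,
    (if t +ᵥ Vset k ⊆ (fun x : Tomega => x i) ⁻¹' U then t +ᵥ Vset k else ∅), ?_, ?_⟩
  · apply MeasurableSet.iUnion
    intro k
    apply MeasurableSet.biUnion (HFin k).countable_toSet
    intro t ht
    split_ifs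
    · have h1 : MeasurableSet[RdF k] (t +ᵥ Vset k) := cell_mem_RdF (by omega) (mem_HFin.mp ht)
      exact (le_iSup (fun m => (RdF m : MeasurableSpace Tomega)) k) _ h1
    · exact @MeasurableSet.empty _ (⨆ m, (RdF m : MeasurableSpace Tomega))
  · apply measure_mono_null ?_ (dyadicBad_null μ)
    intro x hx
    rw [Set.mem_symmDiff] at hx
    rcases hx with ⟨hxU, hxB⟩ | ⟨hxB, hxU⟩
    · by_contra hxd
      have hxg := not_mem_dyadicBad hxd
      obtain ⟨e₀, he₀⟩ := grid_small hU hxU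
      obtain ⟨kk, hkk⟩ := ((rdfExp_tendsto i).eventually_ge_atTop (e₀+1)).exists
      obtain ⟨t, htH, κ, hteq, hxt⟩ := cell_cover hxg kk
      have hie : rdfExp kk i ≠ 0 := by omega
      have harc : gridArc (rdfExp kk i) (κ i) ⊆ U :=
        he₀ (rdfExp kk i) (by omega) (κ i) (hxt i hie)
      have hsub : t +ᵥ Vset kk ⊆ (fun x : Tomega => x i) ⁻¹' U := by
        rw [hteq]
        intro y hy
        exact harc (hy i hie)
      apply hxB
      apply Set.mem_iUnion.mpr ⟨kk, ?_⟩
      apply Set.mem_biUnion (mem_HFin.mpr htH)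
      rw [if_pos hsub, hteq]
      exact hxt
    · exfalso
      obtain ⟨k, hk⟩ := Set.mem_iUnion.mp hxB
      obtain ⟨t, ht, hcell⟩ := Set.mem_iUnion₂.mp hk
      by_cases hcond : t +ᵥ Vset k ⊆ (fun x : Tomega => x i) ⁻¹' U
      · rw [if_pos hcond] at hcell
        exact hxU (hcond hcell)
      · rw [if_neg hcond] at hcell
        exact hcell

lemma pi_le_aeSup (μ : Measure Tomega) [μ.IsAddHaarMeasure] [IsProbabilityMeasure μ] :
    (inferInstance : MeasurableSpace Tomega) ≤
      aeSup μ (⨆ m, (RdF m : MeasurableSpace Tomega)) := by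
  have hrepr : (inferInstance : MeasurableSpace Tomega)
      = ⨆ i : ℕ, MeasurableSpace.comap (fun x : Tomega => x i)
          (inferInstance : MeasurableSpace (AddCircle (1:ℝ))) := rfl
  refine le_trans (le_of_eq hrepr) (iSup_le fun i => ?_)
  have hb : (inferInstance : MeasurableSpace (AddCircle (1:ℝ))) =
      MeasurableSpace.generateFrom {U : Set (AddCircle (1:ℝ)) | IsOpen U} :=
    BorelSpace.measurable_eq
  rw [hb, MeasurableSpace.comap_generateFrom]
  apply MeasurableSpace.generateFrom_le
  rintro s ⟨U, hU, rfl⟩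
  exact open_preimage_aeSup μ i U hU

lemma ae_eq_condexp_sup (μ : Measure Tomega) [μ.IsAddHaarMeasure] [IsProbabilityMeasure μ]
    (f : Tomega → ℝ) (hf : Integrable f μ) :
    f =ᵐ[μ] μ[f | ⨆ m, (RdF m : MeasurableSpace Tomega)] := by
  have hle : (⨆ m, (RdF m : MeasurableSpace Tomega)) ≤ (inferInstance : MeasurableSpace Tomega) :=
    iSup_le fun m => RdF.le m
  haveI : SigmaFinite (μ.trim hle) := inferInstance
  have hint : ∀ A : Set Tomega, MeasurableSet A →
      ∫ x in A, f x ∂μ = ∫ x in A, (μ[f | ⨆ m, (RdF m : MeasurableSpace Tomega)]) x ∂μ := by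
    intro A hA
    obtain ⟨B, hB, h0⟩ := measurableSet_aeSup_iff.mp (pi_le_aeSup μ A hA)
    have hAB : A =ᵐ[μ] B := measure_symmDiff_eq_zero_iff.mp h0
    rw [setIntegral_congr_set hAB, setIntegral_congr_set hAB]
    exact (setIntegral_condExp hle hf hB).symm
  exact ae_eq_of_forall_setIntegral_eq_of_sigmaFinite
    (fun s _ _ => hf.integrableOn)
    (fun s _ _ => integrable_condExp.integrableOn)
    (fun s hs _ => hint s hs)

/-- **The restricted Rubio de Francia basis `ℛ₀` differentiates `L¹(T^ω)`**: for every
`f ∈ L¹(T^ω)` and almost every `x`, if for each `m ≥ 1` the set `I m` is the element of the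
net `𝒩_{m+1} = {t + V_{m+1} : t ∈ H_{m+1}}` containing `x`, then the averages of `f` over
`I m` converge to `f x`. -/
theorem R0_differentiates_L1 (μ : Measure Tomega) [μ.IsAddHaarMeasure]
    [IsProbabilityMeasure μ] (f : Tomega → ℝ) (hf : Integrable f μ) :
    ∀ᵐ x ∂μ, ∀ I : ℕ → Set Tomega,
      (∀ m : ℕ, ∃ t ∈ Hgrp (m + 1), I m = t +ᵥ Vset (m + 1) ∧ x ∈ I m) →
      Filter.Tendsto (fun m => (μ (I m)).toReal⁻¹ * ∫ y in I m, f y ∂μ)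
        Filter.atTop (𝓝 (f x)) := by
  classical
  have h1 := MeasureTheory.tendsto_ae_condExp (μ := μ) (ℱ := RdF) f
  have h2 := ae_eq_condexp_sup μ f hf
  have h3 : ∀ᵐ x ∂μ, ∀ m : ℕ, (μ[f| RdF m]) x = avgF μ f m x :=
    ae_all_iff.mpr fun m => condexp_eq_avgF μ f hf m
  filter_upwards [h1, h2, h3] with x hx1 hx2 hx3
  intro I hI
  have key : ∀ m : ℕ, (μ (I m)).toReal⁻¹ * ∫ y in I m, f y ∂μ = (μ[f | RdF m]) x := by
    intro m
    obtain ⟨t, ht, hIm, hxI⟩ := hI m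
    rw [hx3 m]
    rw [hIm] at hxI ⊢
    have hsum : avgF μ f m x = Set.indicator (t +ᵥ Vset (m+1))
        (fun _ => (μ (t +ᵥ Vset (m+1))).toReal⁻¹ * ∫ y in t +ᵥ Vset (m+1), f y ∂μ) x := by
      rw [avgF, Finset.sum_apply]
      apply Finset.sum_eq_single_of_mem t (mem_HFin.mpr ht)
      intro s hs hst
      apply Set.indicator_of_notMem
      intro hxs
      exact Set.disjoint_left.mp (cell_disjoint (mem_HFin.mp hs) ht hst) hxs hxI
    rw [hsum, Set.indicator_of_mem hxI]
  have hfun : (fun m => (μ (I m)).toReal⁻¹ * ∫ y in I m, f y ∂μ)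
      = fun m => (μ[f | RdF m]) x := funext key
  rw [hfun, show f x = (μ[f | ⨆ m, (RdF m : MeasurableSpace Tomega)]) x from hx2]
  exact hx1
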